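/- The function H(x,y,ε) = exp(2·arg(ε + x² + i(x² + 2y − ε)))·(ε² + x⁴ − 2εy + 2x²y + 2y²), where arg denotes the argument of a complex number, is a first integral of the system ẋ = y + x², ẏ = −εx − x³ on the open set where ε + x² + i(x² + 2y − ε) ≠ 0, for every ε > 0. -/

import Mathlib

open Real

lemma arg_eq_arctan' {z : ℂ} (h : 0 < z.re) :
    Complex.arg z = Real.arctan (z.im / z.re) := by
  rw [← Complex.tan_arg]
  have := Complex.abs_arg_lt_pi_div_two_iff.2 (Or.inl h)
  rw [abs_lt] at this
  exact (Real.arctan_tan this.1 this.2).symm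

theorem nonanalytic_first_integral (ε : ℝ) (hε : ε > 0) :
    ∀ x y : ℝ,
      ((ε + x^2 : ℝ) : ℂ) + Complex.I * ((x^2 + 2*y - ε : ℝ) : ℂ) ≠ 0 →
      (y + x^2) *
        deriv (fun x : ℝ =>
          Real.exp (2 * Complex.arg (((ε + x^2 : ℝ) : ℂ)
            + Complex.I * ((x^2 + 2*y - ε : ℝ) : ℂ))) *
          (ε^2 + x^4 - 2*ε*y + 2*x^2*y + 2*y^2)) x +
      (-ε*x - x^3) *
        deriv (fun y : ℝ =>
          Real.exp (2 * Complex.arg (((ε + x^2 : ℝ) : ℂ)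
            + Complex.I * ((x^2 + 2*y - ε : ℝ) : ℂ))) *
          (ε^2 + x^4 - 2*ε*y + 2*x^2*y + 2*y^2)) y = 0 := by
  intro x y _
  have harg : ∀ a b : ℝ, 0 < a →
      Complex.arg ((a : ℂ) + Complex.I * (b : ℂ)) = Real.arctan (b / a) := by
    intro a b ha
    rw [arg_eq_arctan' (by simp [ha])]
    congr 1; simp
  have hpos : ∀ t : ℝ, (0:ℝ) < ε + t^2 := fun t => by positivity
  have e1 : (fun x : ℝ =>
          Real.exp (2 * Complex.arg (((ε + x^2 : ℝ) : ℂ)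
            + Complex.I * ((x^2 + 2*y - ε : ℝ) : ℂ))) *
          (ε^2 + x^4 - 2*ε*y + 2*x^2*y + 2*y^2)) =
      (fun x : ℝ => Real.exp (2 * Real.arctan ((x^2 + 2*y - ε)/(ε + x^2))) *
          (ε^2 + x^4 - 2*ε*y + 2*x^2*y + 2*y^2)) := by
    funext t; rw [harg _ _ (hpos t)]
  have e2 : (fun y : ℝ =>
          Real.exp (2 * Complex.arg (((ε + x^2 : ℝ) : ℂ)
            + Complex.I * ((x^2 + 2*y - ε : ℝ) : ℂ))) *
          (ε^2 + x^4 - 2*ε*y + 2*x^2*y + 2*y^2)) =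
      (fun s : ℝ => Real.exp (2 * Real.arctan ((x^2 + 2*s - ε)/(ε + x^2))) *
          (ε^2 + x^4 - 2*ε*s + 2*x^2*s + 2*s^2)) := by
    funext s; rw [harg _ _ (hpos x)]
  rw [e1, e2]
  set a : ℝ := ε + x^2 with ha
  have ha0 : a ≠ 0 := ne_of_gt (hpos x)
  set b : ℝ := x^2 + 2*y - ε with hb
  -- derivative in x
  have hux : HasDerivAt (fun t : ℝ => (t^2 + 2*y - ε)/(ε + t^2))
      ((2*x*(ε+x^2) - (x^2+2*y-ε)*(2*x))/(ε+x^2)^2) x := by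
    have h1 : HasDerivAt (fun t : ℝ => t^2 + 2*y - ε) (2*x) x := by
      simpa using (((hasDerivAt_pow 2 x).add_const (2*y)).sub_const ε)
    have h2 : HasDerivAt (fun t : ℝ => ε + t^2) (2*x) x := by
      simpa using ((hasDerivAt_pow 2 x).const_add ε)
    simpa [Pi.div_def] using h1.div h2 ha0
  have hx : HasDerivAt (fun t : ℝ => Real.exp (2 * Real.arctan ((t^2 + 2*y - ε)/(ε + t^2))) *
          (ε^2 + t^4 - 2*ε*y + 2*t^2*y + 2*y^2))
      (Real.exp (2 * Real.arctan (b/a)) *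
        (2 * (1/(1+(b/a)^2) * ((2*x*a - b*(2*x))/a^2))) * (ε^2 + x^4 - 2*ε*y + 2*x^2*y + 2*y^2)
       + Real.exp (2 * Real.arctan (b/a)) * (4*x^3 + 2*(2*x)*y)) x := by
    have hA : HasDerivAt (fun t : ℝ => Real.exp (2 * Real.arctan ((t^2 + 2*y - ε)/(ε + t^2))))
        (Real.exp (2 * Real.arctan (b/a)) * (2 * (1/(1+(b/a)^2) * ((2*x*a - b*(2*x))/a^2)))) x := by
      exact (hux.arctan.const_mul 2).exp
    have hB : HasDerivAt (fun t : ℝ => ε^2 + t^4 - 2*ε*y + 2*t^2*y + 2*y^2)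
        (4*x^3 + 2*(2*x)*y) x := by
      have := (((((hasDerivAt_pow 4 x).const_add (ε^2)).sub_const (2*ε*y)).add
        (((hasDerivAt_pow 2 x).const_mul 2).mul_const y)).add_const (2*y^2))
      refine this.congr_deriv ?_
      push_cast; ring
    simpa [Pi.mul_def] using hA.mul hB
  -- derivative in y
  have huy : HasDerivAt (fun s : ℝ => (x^2 + 2*s - ε)/(ε + x^2)) (2/a) y := by
    have h1 : HasDerivAt (fun s : ℝ => x^2 + 2*s - ε) 2 y := by
      simpa using (((hasDerivAt_id y).const_mul 2).const_add (x^2)).sub_const ε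
    simpa using h1.div_const a
  have hy : HasDerivAt (fun s : ℝ => Real.exp (2 * Real.arctan ((x^2 + 2*s - ε)/(ε + x^2))) *
          (ε^2 + x^4 - 2*ε*s + 2*x^2*s + 2*s^2))
      (Real.exp (2 * Real.arctan (b/a)) * (2 * (1/(1+(b/a)^2) * (2/a)))
        * (ε^2 + x^4 - 2*ε*y + 2*x^2*y + 2*y^2)
       + Real.exp (2 * Real.arctan (b/a)) * (-(2*ε) + 2*x^2 + 2*(2*y))) y := by
    have hA : HasDerivAt (fun s : ℝ => Real.exp (2 * Real.arctan ((x^2 + 2*s - ε)/(ε + x^2))))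
        (Real.exp (2 * Real.arctan (b/a)) * (2 * (1/(1+(b/a)^2) * (2/a)))) y := by
      exact (huy.arctan.const_mul 2).exp
    have hB : HasDerivAt (fun s : ℝ => ε^2 + x^4 - 2*ε*s + 2*x^2*s + 2*s^2)
        (-(2*ε) + 2*x^2 + 2*(2*y)) y := by
      have := ((((hasDerivAt_id y).const_mul (2*ε)).neg.const_add (ε^2 + x^4)).add
        ((hasDerivAt_id y).const_mul (2*x^2))).add ((hasDerivAt_pow 2 y).const_mul 2)
      refine this.congr_deriv ?_
      push_cast; ring
    simpa [Pi.mul_def] using hA.mul hB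
  rw [hx.deriv, hy.deriv]
  have hden : 1 + (b/a)^2 ≠ 0 := by positivity
  set E := Real.exp (2 * Real.arctan (b/a))
  have key : 1 + (b/a)^2 = (a^2 + b^2)/a^2 := by field_simp
  rw [key]
  field_simp
  ring
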